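/- arXiv:1012.3197 — 2 statements merged into one kernel-verified Lean document; each statement's English description precedes it below -/
import Mathlib

section
/- Let H be a separable Hilbert space and π : B(H) → B(Û) a normal unital *-homomorphism into the bounded operators on a (not necessarily separable) Hilbert space Û. If there exists a separable subset S ⊂ Û such that the linear span of {π(A)v : A ∈ B(H), v ∈ S} is dense in Û, then Û is separable. -/
open scoped ComplexOrder InnerProductSpace
open Filter Topology ContinuousLinearMap

set_option synthInstance.maxHeartbeats 1000000
set_option maxHeartbeats 1000000

noncomputable section

namespace QSM

noncomputable instance piLpComplete (ι : Type*) (E : Type*) [NormedAddCommGroup E]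
    [CompleteSpace E] : CompleteSpace (PiLp 2 fun _ : ι => E) :=
  (PiLp.uniformEquiv 2 fun _ : ι => E).completeSpace_iff.2 inferInstance

variable {H K : Type*}
  [NormedAddCommGroup H] [InnerProductSpace ℂ H] [CompleteSpace H]
  [NormedAddCommGroup K] [InnerProductSpace ℂ K] [CompleteSpace K]

/-- Sequential/net convergence in the weak operator topology. -/
def WOTto {E F : Type*} [NormedAddCommGroup E] [InnerProductSpace ℂ E]
    [NormedAddCommGroup F] [InnerProductSpace ℂ F]
    {ι : Type*} [Preorder ι] (T : ι → (E →L[ℂ] F)) (T' : E →L[ℂ] F) : Prop :=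
  ∀ x y, Tendsto (fun n => ⟪x, T n y⟫_ℂ) atTop (𝓝 ⟪x, T' y⟫_ℂ)

section MatOp

variable {ι : Type*} [Fintype ι] [DecidableEq ι]
variable {E F : Type*} [NormedAddCommGroup E] [InnerProductSpace ℂ E]
  [NormedAddCommGroup F] [InnerProductSpace ℂ F]

/-- The `j`-th coordinate projection on the Hilbert space direct sum. -/
def projCLM (E : Type*) [NormedAddCommGroup E] [InnerProductSpace ℂ E] (j : ι) :
    (PiLp 2 fun _ : ι => E) →L[ℂ] E :=
  (ContinuousLinearMap.proj j).comp (PiLp.continuousLinearEquiv 2 ℂ _).toContinuousLinearMap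

/-- The `i`-th coordinate inclusion into the Hilbert space direct sum. -/
def inclCLM (E : Type*) [NormedAddCommGroup E] [InnerProductSpace ℂ E] (i : ι) :
    E →L[ℂ] (PiLp 2 fun _ : ι => E) :=
  ((PiLp.continuousLinearEquiv 2 ℂ _).symm.toContinuousLinearMap).comp
    (ContinuousLinearMap.pi fun j => if j = i then ContinuousLinearMap.id ℂ E else 0)

/-- The operator on the `n`-fold Hilbert space direct sum determined by a matrix of operators.
This realizes the identification `Mₙ(B(E)) = B(Eⁿ)` used for amplifications. -/
def matOp (T : ι → ι → (E →L[ℂ] F)) : (PiLp 2 fun _ : ι => E) →L[ℂ] (PiLp 2 fun _ : ι => F) :=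
  ∑ i, ∑ j, (inclCLM F i).comp ((T i j).comp (projCLM E j))

end MatOp

variable (S : StarSubalgebra ℂ (H →L[ℂ] H))

/-- A linear map `Φ : S → B(K)` is completely positive if all of its amplifications
map positive matrices over `S` to positive operators. -/
def IsCPMap (Φ : S →ₗ[ℂ] (K →L[ℂ] K)) : Prop :=
  ∀ (n : ℕ) (a : Matrix (Fin n) (Fin n) S),
    (matOp fun i j => (a i j : H →L[ℂ] H)).IsPositive →
    (matOp fun i j => Φ (a i j)).IsPositive

/-- A linear map `Φ : S → B(K)` is completely bounded with complete bound `C` if all of its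
amplifications have norm at most `C` times the norm of the input matrix. -/
def IsCBMap (Φ : S →ₗ[ℂ] (K →L[ℂ] K)) (C : ℝ) : Prop :=
  ∀ (n : ℕ) (a : Matrix (Fin n) (Fin n) S),
    ‖matOp fun i j => Φ (a i j)‖ ≤ C * ‖matOp fun i j => (a i j : H →L[ℂ] H)‖

/-- Weak*-continuity (equivalently, for positive maps, normality) of a map `Φ : S → B(K)`:
`Φ` maps bounded weak-operator convergent sequences to weak-operator convergent sequences.
(On bounded sets of `B(H)`, `H` separable, the weak* topology coincides with the weak operator
topology and is metrizable, so sequences suffice.) -/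
def WStarCont (Φ : S →ₗ[ℂ] (K →L[ℂ] K)) : Prop :=
  ∀ (A : ℕ → S) (A' : S) (c : ℝ),
    (∀ n, ‖(A n : H →L[ℂ] H)‖ ≤ c) →
    WOTto (fun n => (A n : H →L[ℂ] H)) (A' : H →L[ℂ] H) →
    WOTto (fun n => Φ (A n)) (Φ A')

/-- A normal completely positive map. -/
def NormalCP (Φ : S →ₗ[ℂ] (K →L[ℂ] K)) : Prop :=
  IsCPMap S Φ ∧ WStarCont S Φ

/-- The cone ordering on maps: `Φ ⪯ Ψ` iff `Ψ - Φ` is a normal CP map. -/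
def CPle (Φ Ψ : S →ₗ[ℂ] (K →L[ℂ] K)) : Prop := NormalCP S (Ψ - Φ)

/-- A quantum channel into the von Neumann algebra `N`: a unital normal CP map with range in
`N`. -/
def IsChannel (N : VonNeumannAlgebra K) (Φ : S →ₗ[ℂ] (K →L[ℂ] K)) : Prop :=
  NormalCP S Φ ∧ (∀ X, Φ X ∈ N) ∧ Φ 1 = 1

/-- The elementary map `E ⊙ F : S → B(K)`, `A ↦ E A F`, for `E ∈ B(H,K)`, `F ∈ B(K,H)`. -/
def sandwichMap (L : H →L[ℂ] K) (R : K →L[ℂ] H) : S →ₗ[ℂ] (K →L[ℂ] K) where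
  toFun A := L ∘L ((A : H →L[ℂ] H) ∘L R)
  map_add' a b := by simp [add_comp, comp_add]
  map_smul' c a := by simp [smul_comp, comp_smulₛₗ]


/-- `B(H)` itself, regarded as a von Neumann algebra on `H`. -/
def topVN (H : Type*) [NormedAddCommGroup H] [InnerProductSpace ℂ H] [CompleteSpace H] :
    VonNeumannAlgebra H where
  toStarSubalgebra := ⊤
  centralizer_centralizer' := by
    show Set.centralizer (Set.centralizer ((⊤ : StarSubalgebra ℂ (H →L[ℂ] H)) : Set (H →L[ℂ] H)))
      = ((⊤ : StarSubalgebra ℂ (H →L[ℂ] H)) : Set (H →L[ℂ] H))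
    ext x
    simp only [Set.mem_centralizer_iff]
    constructor
    · intro _; simp
    · intro _ g hg
      exact (hg x (by simp)).symm

/-- The inclusion map `M ↪ B(H)` as a linear map. -/
def inclusionMap (M : VonNeumannAlgebra H) : M.toStarSubalgebra →ₗ[ℂ] (H →L[ℂ] H) where
  toFun A := (A : H →L[ℂ] H)
  map_add' _ _ := rfl
  map_smul' _ _ := rfl

theorem mem_topVN_sa {H : Type*} [NormedAddCommGroup H] [InnerProductSpace ℂ H]
    [CompleteSpace H] (a : H →L[ℂ] H) : a ∈ (topVN H).toStarSubalgebra := by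
  show a ∈ (⊤ : StarSubalgebra ℂ (H →L[ℂ] H))
  exact StarSubalgebra.mem_top

/-- The linear space of weak*-continuous completely bounded maps from `M` to `B(K)` with
values in `N`, realized (via the equality `CB = span CP` proved in the paper) as the linear
span of the normal completely positive maps from `M` into `N`. -/
def CBsp (M : VonNeumannAlgebra H) (N : VonNeumannAlgebra K) :
    Submodule ℂ (M.toStarSubalgebra →ₗ[ℂ] (K →L[ℂ] K)) :=
  Submodule.span ℂ {Φ | NormalCP M.toStarSubalgebra Φ ∧ ∀ X, Φ X ∈ N}

/-- `Eₙ ⇑ E` : the sequence `Eₙ` of normal CP maps is CP-increasing, CP-bounded by the normal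
CP map `E`, and converges pointwise to `E` in the weak operator topology (so that `E` is its
least upper bound). -/
def CPUp (E : ℕ → (S →ₗ[ℂ] (K →L[ℂ] K))) (E' : S →ₗ[ℂ] (K →L[ℂ] K)) : Prop :=
  (∀ n, NormalCP S (E n)) ∧ NormalCP S E' ∧
  (∀ n m, n ≤ m → CPle S (E n) (E m)) ∧ (∀ n, CPle S (E n) E') ∧
  ∀ X, WOTto (fun n => E n X) (E' X)

section Supermap

variable {H₁ K₁ H₂ K₂ : Type*}
  [NormedAddCommGroup H₁] [InnerProductSpace ℂ H₁] [CompleteSpace H₁]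
  [NormedAddCommGroup K₁] [InnerProductSpace ℂ K₁] [CompleteSpace K₁]
  [NormedAddCommGroup H₂] [InnerProductSpace ℂ H₂] [CompleteSpace H₂]
  [NormedAddCommGroup K₂] [InnerProductSpace ℂ K₂] [CompleteSpace K₂]
  {M₁ : VonNeumannAlgebra H₁} {N₁ : VonNeumannAlgebra K₁}
  {M₂ : VonNeumannAlgebra H₂} {N₂ : VonNeumannAlgebra K₂}

/-- Complete positivity of a supermap `Sm : CB(M₁,N₁) → CB(M₂,N₂)`: for every `n`, the
amplification `Iₙ ⊗ Sm` is positive.  Here a map `CB(M₁⁽ⁿ⁾,N₁⁽ⁿ⁾)` is encoded by its components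
`t k l i j ∈ CB(M₁,N₁)` under the identification `CB(M₁⁽ⁿ⁾,N₁⁽ⁿ⁾) = CB(Mₙ(ℂ),Mₙ(ℂ)) ⊗ CB(M₁,N₁)`,
and positivity of a map of matrix algebras means that it sends positive matrices (viewed as
operators on the direct sum via `matOp`) to positive matrices. -/
def SupCP (Sm : CBsp M₁ N₁ →ₗ[ℂ] CBsp M₂ N₂) : Prop :=
  ∀ (n : ℕ) (t : Fin n → Fin n → Fin n → Fin n → CBsp M₁ N₁),
    (∀ A : Matrix (Fin n) (Fin n) M₁.toStarSubalgebra,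
      (matOp fun i j => (A i j : H₁ →L[ℂ] H₁)).IsPositive →
      (matOp fun k l => ∑ i, ∑ j,
        ((t k l i j : M₁.toStarSubalgebra →ₗ[ℂ] (K₁ →L[ℂ] K₁)) (A i j))).IsPositive) →
    ∀ B : Matrix (Fin n) (Fin n) M₂.toStarSubalgebra,
      (matOp fun i j => (B i j : H₂ →L[ℂ] H₂)).IsPositive →
      (matOp fun k l => ∑ i, ∑ j,
        ((Sm (t k l i j) : M₂.toStarSubalgebra →ₗ[ℂ] (K₂ →L[ℂ] K₂)) (B i j))).IsPositive

/-- Normality of a supermap: `Sm` preserves least upper bounds of CP-increasing CP-bounded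
sequences. -/
def SupNormal (Sm : CBsp M₁ N₁ →ₗ[ℂ] CBsp M₂ N₂) : Prop :=
  ∀ (E : ℕ → CBsp M₁ N₁) (E' : CBsp M₁ N₁),
    CPUp M₁.toStarSubalgebra (fun n => (E n : M₁.toStarSubalgebra →ₗ[ℂ] (K₁ →L[ℂ] K₁)))
      (E' : M₁.toStarSubalgebra →ₗ[ℂ] (K₁ →L[ℂ] K₁)) →
    CPUp M₂.toStarSubalgebra (fun n => (Sm (E n) : M₂.toStarSubalgebra →ₗ[ℂ] (K₂ →L[ℂ] K₂)))
      (Sm E' : M₂.toStarSubalgebra →ₗ[ℂ] (K₂ →L[ℂ] K₂))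

/-- A quantum supermap: a linear, completely positive, normal map between spaces of
weak*-continuous completely bounded maps. -/
def IsSupermap (Sm : CBsp M₁ N₁ →ₗ[ℂ] CBsp M₂ N₂) : Prop :=
  SupCP Sm ∧ SupNormal Sm

/-- A deterministic quantum supermap: a quantum supermap mapping quantum channels to quantum
channels. -/
def IsDetSupermap (Sm : CBsp M₁ N₁ →ₗ[ℂ] CBsp M₂ N₂) : Prop :=
  IsSupermap Sm ∧
  ∀ E : CBsp M₁ N₁,
    IsChannel M₁.toStarSubalgebra N₁ (E : M₁.toStarSubalgebra →ₗ[ℂ] (K₁ →L[ℂ] K₁)) →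
    IsChannel M₂.toStarSubalgebra N₂ (Sm E : M₂.toStarSubalgebra →ₗ[ℂ] (K₂ →L[ℂ] K₂))

end Supermap

/-- The Loewner order on bounded operators. -/
def opLE {E : Type*} [NormedAddCommGroup E] [InnerProductSpace ℂ E] [CompleteSpace E]
    (a b : E →L[ℂ] E) : Prop := (b - a).IsPositive

/-- Least upper bounds for the Loewner order. -/
def opIsLUB {E : Type*} [NormedAddCommGroup E] [InnerProductSpace ℂ E] [CompleteSpace E]
    (s : Set (E →L[ℂ] E)) (a : E →L[ℂ] E) : Prop :=
  (∀ b ∈ s, opLE b a) ∧ ∀ c, (∀ b ∈ s, opLE b c) → opLE a c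

section Tensor

/-- A realization of the Hilbert space tensor product `H₁ ⊗ H₂` : a Hilbert space `G` together
with a bilinear map `t : H₁ × H₂ → G` with total range and satisfying the characteristic
inner product identity. -/
structure TensorStruct (H₁ H₂ G : Type*) [NormedAddCommGroup H₁] [InnerProductSpace ℂ H₁]
    [NormedAddCommGroup H₂] [InnerProductSpace ℂ H₂]
    [NormedAddCommGroup G] [InnerProductSpace ℂ G] : Type _ where
  t : H₁ →ₗ[ℂ] H₂ →ₗ[ℂ] G
  inner_t : ∀ x y v w, ⟪t x v, t y w⟫_ℂ = ⟪x, y⟫_ℂ * ⟪v, w⟫_ℂ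
  dense_t : Dense (↑(Submodule.span ℂ {g | ∃ x v, g = t x v}) : Set G)

variable {H₁ H₂ G : Type*}
  [NormedAddCommGroup H₁] [InnerProductSpace ℂ H₁] [CompleteSpace H₁]
  [NormedAddCommGroup H₂] [InnerProductSpace ℂ H₂] [CompleteSpace H₂]
  [NormedAddCommGroup G] [InnerProductSpace ℂ G] [CompleteSpace G]

/-- The set of elementary tensors `a ⊗ b`, `a ∈ M`, `b ∈ N`, inside `B(H₁ ⊗ H₂)`. -/
def elemT (τ : TensorStruct H₁ H₂ G) (M : VonNeumannAlgebra H₁) (N : VonNeumannAlgebra H₂) :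
    Set (G →L[ℂ] G) :=
  {c | ∃ a ∈ M, ∃ b ∈ N, ∀ x v, c (τ.t x v) = τ.t (a x) (b v)}

/-- The von Neumann algebra tensor product `M ⊗̄ N`, realized as the double commutant of the
set of elementary tensors. -/
def vnT (τ : TensorStruct H₁ H₂ G) (M : VonNeumannAlgebra H₁) (N : VonNeumannAlgebra H₂) :
    VonNeumannAlgebra G where
  toStarSubalgebra := StarSubalgebra.centralizer ℂ
    ((StarSubalgebra.centralizer ℂ (elemT τ M N) :
        StarSubalgebra ℂ (G →L[ℂ] G)) : Set (G →L[ℂ] G))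
  centralizer_centralizer' := by
    show Set.centralizer (Set.centralizer ((StarSubalgebra.centralizer ℂ
        ((StarSubalgebra.centralizer ℂ (elemT τ M N) :
          StarSubalgebra ℂ (G →L[ℂ] G)) : Set (G →L[ℂ] G))) : Set (G →L[ℂ] G)))
      = ((StarSubalgebra.centralizer ℂ
        ((StarSubalgebra.centralizer ℂ (elemT τ M N) :
          StarSubalgebra ℂ (G →L[ℂ] G)) : Set (G →L[ℂ] G))) : Set (G →L[ℂ] G))
    rw [StarSubalgebra.coe_centralizer_centralizer]
    exact Set.centralizer_centralizer_centralizer _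

end Tensor

section Amp

variable {H₁ K₁ H₂ K₂ V G G' : Type*}
  [NormedAddCommGroup H₁] [InnerProductSpace ℂ H₁] [CompleteSpace H₁]
  [NormedAddCommGroup K₁] [InnerProductSpace ℂ K₁] [CompleteSpace K₁]
  [NormedAddCommGroup H₂] [InnerProductSpace ℂ H₂] [CompleteSpace H₂]
  [NormedAddCommGroup K₂] [InnerProductSpace ℂ K₂] [CompleteSpace K₂]
  [NormedAddCommGroup V] [InnerProductSpace ℂ V] [CompleteSpace V]
  [NormedAddCommGroup G] [InnerProductSpace ℂ G] [CompleteSpace G]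
  [NormedAddCommGroup G'] [InnerProductSpace ℂ G'] [CompleteSpace G']

/-- `Ē` is the amplification `E ⊗ id_{B(V)} : M ⊗̄ B(V) → B(K₁ ⊗ V)` of the
weak*-continuous completely bounded map `E : M → B(K₁)` : it is weak*-continuous and acts in
the expected way on elementary tensors. -/
def IsAmp (M : VonNeumannAlgebra H₁) (τ : TensorStruct H₁ V G) (κ : TensorStruct K₁ V G')
    (E : M.toStarSubalgebra →ₗ[ℂ] (K₁ →L[ℂ] K₁))
    (Ebar : (vnT τ M (topVN V)).toStarSubalgebra →ₗ[ℂ] (G' →L[ℂ] G')) : Prop :=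
  WStarCont (vnT τ M (topVN V)).toStarSubalgebra Ebar ∧
  ∀ (c : (vnT τ M (topVN V)).toStarSubalgebra) (a : H₁ →L[ℂ] H₁) (ha : a ∈ M) (b : V →L[ℂ] V),
    (∀ x v, (c : G →L[ℂ] G) (τ.t x v) = τ.t (a x) (b v)) →
    ∀ x v, (Ebar c) (κ.t x v) = κ.t ((E ⟨a, ha⟩) x) (b v)

/-- The triple `(V, W, F)` (presented through concrete realizations `τ`, `κ` of the Hilbert
tensor products `H₁ ⊗ V` and `K₁ ⊗ V`) is a dilation of the supermap `Sm`, i.e.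
`[Sm(E)](A) = W* [(E ⊗ id_V)(F(A))] W` for all `E ∈ CB(M₁, B(K₁))` and `A ∈ M₂`. -/
def DilatesTo (M₁ : VonNeumannAlgebra H₁) (M₂ : VonNeumannAlgebra H₂)
    (τ : TensorStruct H₁ V G) (κ : TensorStruct K₁ V G') (W : K₂ →L[ℂ] G')
    (F : M₂.toStarSubalgebra →ₗ[ℂ] (G →L[ℂ] G)) (hF : ∀ X, F X ∈ vnT τ M₁ (topVN V))
    (Sm : CBsp M₁ (topVN K₁) →ₗ[ℂ] CBsp M₂ (topVN K₂)) : Prop :=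
  ∀ E : CBsp M₁ (topVN K₁),
    ∃ Ebar, IsAmp M₁ τ κ (E : M₁.toStarSubalgebra →ₗ[ℂ] (K₁ →L[ℂ] K₁)) Ebar ∧
      ∀ A, (Sm E : M₂.toStarSubalgebra →ₗ[ℂ] (K₂ →L[ℂ] K₂)) A
        = (ContinuousLinearMap.adjoint W) ∘L ((Ebar ⟨F A, hF A⟩) ∘L W)

/-- Minimality of a dilation: `V = span closure of {(u* ⊗ I_V) W v | u ∈ K₁, v ∈ K₂}`. -/
def MinimalDil (κ : TensorStruct K₁ V G') (W : K₂ →L[ℂ] G') : Prop :=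
  Dense (↑(Submodule.span ℂ {w : V | ∃ (u : K₁) (v : K₂) (ℓ : G' →L[ℂ] V),
    (∀ k z, ℓ (κ.t k z) = ⟪u, k⟫_ℂ • z) ∧ w = ℓ (W v)}) : Set V)

end Amp

/-- A bundled separable complex Hilbert space. -/
structure HilbertSpaceStruct : Type 1 where
  carrier : Type
  [grp : NormedAddCommGroup carrier]
  [ipc : InnerProductSpace ℂ carrier]
  [cpl : CompleteSpace carrier]
  [sep : TopologicalSpace.SeparableSpace carrier]

attribute [instance] HilbertSpaceStruct.grp HilbertSpaceStruct.ipc HilbertSpaceStruct.cpl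
  HilbertSpaceStruct.sep


/-- A unital *-homomorphism `π : B(H) → B(U)` is normal if it preserves least upper bounds of
bounded increasing nets of positive operators. -/
def NormalHom {H U : Type*} [NormedAddCommGroup H] [InnerProductSpace ℂ H] [CompleteSpace H]
    [NormedAddCommGroup U] [InnerProductSpace ℂ U] [CompleteSpace U]
    (π : (H →L[ℂ] H) →⋆ₐ[ℂ] (U →L[ℂ] U)) : Prop :=
  ∀ {ι : Type} [Preorder ι] [Nonempty ι] [IsDirected ι (· ≤ ·)],
  ∀ (T : ι → (H →L[ℂ] H)) (T' : H →L[ℂ] H),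
    (∀ i, (T i).IsPositive) → (∀ i j, i ≤ j → opLE (T i) (T j)) →
    (∃ Bd, ∀ i, opLE (T i) Bd) →
    opIsLUB (Set.range T) T' → opIsLUB (Set.range fun i => π (T i)) (π T')


section Statement12Aux

variable {E : Type*} [NormedAddCommGroup E] [InnerProductSpace ℂ E] [CompleteSpace E]

lemma saIdem_reApply (Q : E →L[ℂ] E) (hsa : IsSelfAdjoint Q) (hid : Q * Q = Q) (x : E) :
    Q.reApplyInnerSelf x = ‖Q x‖ ^ 2 := by
  have hsym := (ContinuousLinearMap.isSelfAdjoint_iff_isSymmetric.mp hsa)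
  have h1 : ⟪Q x, Q x⟫_ℂ = ⟪Q x, x⟫_ℂ := by
    calc ⟪Q x, Q x⟫_ℂ = ⟪x, Q (Q x)⟫_ℂ := hsym x (Q x)
    _ = ⟪x, (Q * Q) x⟫_ℂ := rfl
    _ = ⟪x, Q x⟫_ℂ := by rw [hid]
    _ = ⟪Q x, x⟫_ℂ := (hsym x x).symm
  rw [ContinuousLinearMap.reApplyInnerSelf_apply, ← h1]
  exact inner_self_eq_norm_sq (𝕜 := ℂ) (Q x)

lemma saIdem_isPositive (Q : E →L[ℂ] E) (hsa : IsSelfAdjoint Q) (hid : Q * Q = Q) :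
    Q.IsPositive := by
  refine ⟨ContinuousLinearMap.isSelfAdjoint_iff_isSymmetric.mp hsa, fun x => ?_⟩
  rw [saIdem_reApply Q hsa hid x]
  positivity

lemma saIdem_norm_apply_le (Q : E →L[ℂ] E) (hsa : IsSelfAdjoint Q) (hid : Q * Q = Q) (x : E) :
    ‖Q x‖ ≤ ‖x‖ := by
  have h := saIdem_reApply Q hsa hid x
  rw [ContinuousLinearMap.reApplyInnerSelf_apply] at h
  have h2 : ‖Q x‖ ^ 2 ≤ ‖Q x‖ * ‖x‖ := by
    rw [← h]
    exact (RCLike.re_le_norm _).trans (by simpa using norm_inner_le_norm (𝕜 := ℂ) (Q x) x)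
  rcases eq_or_lt_of_le (norm_nonneg (Q x)) with h0 | h0
  · rw [← h0]; exact norm_nonneg x
  · nlinarith

lemma saIdem_apply_eq_zero (Q : E →L[ℂ] E) (hsa : IsSelfAdjoint Q) (hid : Q * Q = Q) (x : E)
    (h : ⟪Q x, x⟫_ℂ = 0) : Q x = 0 := by
  have h1 := saIdem_reApply Q hsa hid x
  rw [ContinuousLinearMap.reApplyInnerSelf_apply, h] at h1
  have : ‖Q x‖ = 0 := by
    have := h1.symm
    simpa [pow_eq_zero_iff] using this
  simpa using this

/-- If `Q ≤ R` are self-adjoint idempotents, then `R` fixes the range of `Q`. -/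
lemma saIdem_fix_of_le (Q R : E →L[ℂ] E) (hsaQ : IsSelfAdjoint Q) (hidQ : Q * Q = Q)
    (hsaR : IsSelfAdjoint R) (hidR : R * R = R) (hle : opLE Q R) (x : E) :
    R (Q x) = Q x := by
  set D := (1 : E →L[ℂ] E) - R with hD
  have hsaD : IsSelfAdjoint D := by
    have h1 : IsSelfAdjoint (1 : E →L[ℂ] E) := by
      rw [IsSelfAdjoint]; exact star_one _
    exact h1.sub hsaR
  have hidD : D * D = D := by
    simp only [hD, mul_sub, sub_mul, one_mul, mul_one, hidR]
    abel
  have hQQ : Q (Q x) = Q x := by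
    have := congrArg (fun T : E →L[ℂ] E => T x) hidQ
    simpa using this
  have hre : D.reApplyInnerSelf (Q x) ≤ 0 := by
    have hpos := hle.2 (Q x)
    rw [ContinuousLinearMap.reApplyInnerSelf_apply] at hpos ⊢
    have hDval : D (Q x) = -((R - Q) (Q x)) := by
      simp [hD, hQQ]
    rw [hDval, inner_neg_left, map_neg]
    linarith
  have h2 := saIdem_reApply D hsaD hidD (Q x)
  have : ‖D (Q x)‖ ^ 2 ≤ 0 := by rw [← h2]; exact hre
  have hdz : D (Q x) = 0 := by
    have : ‖D (Q x)‖ = 0 := by nlinarith [norm_nonneg (D (Q x)), sq_nonneg (‖D (Q x)‖)]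
    simpa using this
  have : Q x - R (Q x) = 0 := by simpa [hD, sub_eq_zero] using hdz
  rw [sub_eq_zero] at this
  exact this.symm

/-- Strong convergence of an increasing sequence of contractions fixing a dense union of
ranges. -/
lemma strong_of_dense (Q : ℕ → (E →L[ℂ] E))
    (hfix : ∀ n m, n ≤ m → ∀ x, Q m (Q n x) = Q n x)
    (hcontr : ∀ n (x : E), ‖Q n x‖ ≤ ‖x‖)
    (hdense : Dense (⋃ n, Set.range (Q n))) (v : E) :
    Tendsto (fun n => Q n v) atTop (𝓝 v) := by
  rw [Metric.tendsto_atTop]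
  intro ε hε
  obtain ⟨w, hw, hwv⟩ : ∃ w ∈ ⋃ n, Set.range (Q n), dist v w < ε / 3 := by
    have := Metric.dense_iff.mp hdense v (ε / 3) (by linarith)
    obtain ⟨w, hw1, hw2⟩ := this
    exact ⟨w, hw2, by simpa [Metric.mem_ball, dist_comm] using hw1⟩
  obtain ⟨N, y, rfl⟩ : ∃ N y, Q N y = w := by
    simpa [Set.mem_iUnion, Set.mem_range] using hw
  refine ⟨N, fun n hn => ?_⟩
  have hfixn : Q n (Q N y) = Q N y := hfix N n hn y
  have : Q n v - v = Q n (v - Q N y) + (Q N y - v) := by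
    rw [map_sub, hfixn]; abel
  rw [dist_eq_norm, this]
  rw [dist_eq_norm] at hwv
  calc ‖Q n (v - Q N y) + (Q N y - v)‖ ≤ ‖Q n (v - Q N y)‖ + ‖Q N y - v‖ := norm_add_le _ _
  _ ≤ ‖v - Q N y‖ + ‖Q N y - v‖ := by gcongr; exact hcontr n _
  _ = ‖v - Q N y‖ + ‖v - Q N y‖ := by rw [norm_sub_rev (Q N y)]
  _ < ε := by linarith


/-- Orthogonal projection onto a complete submodule, as an endomorphism of `E`. -/
def projL (V : Submodule ℂ E) [CompleteSpace V] : E →L[ℂ] E :=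
  V.subtypeL ∘L V.orthogonalProjectionOnto

lemma projL_apply (V : Submodule ℂ E) [CompleteSpace V] (x : E) :
    projL V x = (V.orthogonalProjectionOnto x : E) := rfl

lemma projL_sa (V : Submodule ℂ E) [CompleteSpace V] : IsSelfAdjoint (projL V) :=
  isSelfAdjoint_starProjection V

lemma projL_apply_mem (V : Submodule ℂ E) [CompleteSpace V] (x : E) : projL V x ∈ V :=
  (V.orthogonalProjectionOnto x).2

lemma projL_apply_of_mem (V : Submodule ℂ E) [CompleteSpace V] {x : E} (h : x ∈ V) :
    projL V x = x :=
  Submodule.starProjection_eq_self_iff.mpr h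

lemma projL_idem (V : Submodule ℂ E) [CompleteSpace V] : projL V * projL V = projL V := by
  ext x
  exact projL_apply_of_mem V (projL_apply_mem V x)

lemma projL_sub_mem_orthogonal (V : Submodule ℂ E) [CompleteSpace V] (x : E) :
    x - projL V x ∈ Vᗮ :=
  Submodule.sub_starProjection_mem_orthogonal (K := V) x

/-- Strong convergence of an increasing sequence of self-adjoint idempotents with least
upper bound `1`. -/
lemma saIdem_strong_of_isLUB_one (Q : ℕ → (E →L[ℂ] E))
    (hsa : ∀ n, IsSelfAdjoint (Q n)) (hid : ∀ n, Q n * Q n = Q n)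
    (hmono : ∀ n m, n ≤ m → opLE (Q n) (Q m))
    (hlub : opIsLUB (Set.range Q) 1) (v : E) :
    Tendsto (fun n => Q n v) atTop (𝓝 v) := by
  have hfix : ∀ n m, n ≤ m → ∀ x, Q m (Q n x) = Q n x := fun n m h x =>
    saIdem_fix_of_le _ _ (hsa n) (hid n) (hsa m) (hid m) (hmono n m h) x
  have hcontr : ∀ n (x : E), ‖Q n x‖ ≤ ‖x‖ := fun n x =>
    saIdem_norm_apply_le _ (hsa n) (hid n) x
  set Wsub : Submodule ℂ E :=
    { carrier := ⋃ n, Set.range (Q n)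
      add_mem' := by
        intro a b ha hb
        simp only [Set.mem_iUnion, Set.mem_range] at ha hb ⊢
        obtain ⟨n, xa, rfl⟩ := ha; obtain ⟨m, xb, rfl⟩ := hb
        refine ⟨max n m, Q n xa + Q m xb, ?_⟩
        rw [map_add, hfix n (max n m) (le_max_left _ _), hfix m _ (le_max_right _ _)]
      zero_mem' := by
        simp only [Set.mem_iUnion, Set.mem_range]
        exact ⟨0, 0, map_zero _⟩
      smul_mem' := by
        intro c a ha
        simp only [Set.mem_iUnion, Set.mem_range] at ha ⊢
        obtain ⟨n, xa, rfl⟩ := ha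
        exact ⟨n, c • xa, map_smul _ _ _⟩ } with hWsub
  set W := Wsub.topologicalClosure with hW
  haveI : CompleteSpace W := (Submodule.isClosed_topologicalClosure _).completeSpace_coe
  set P := projL W with hP
  have hQW : ∀ n (x : E), Q n x ∈ W := fun n x =>
    Wsub.le_topologicalClosure (Set.mem_iUnion.mpr ⟨n, Set.mem_range_self x⟩)
  have hQP : ∀ n (x : E), Q n (P x) = Q n x := by
    intro n x
    have horth : x - P x ∈ Wᗮ := projL_sub_mem_orthogonal W x
    have h0 : Q n (x - P x) = 0 := by
      apply saIdem_apply_eq_zero _ (hsa n) (hid n)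
      exact Submodule.inner_right_of_mem_orthogonal (hQW n _) horth
    have := map_sub (Q n) x (P x)
    rw [h0] at this
    have := sub_eq_zero.mp this.symm
    linear_combination (norm := module) -this
  have hub : ∀ n, opLE (Q n) P := by
    intro n
    refine ⟨ContinuousLinearMap.isSelfAdjoint_iff_isSymmetric.mp ((projL_sa W).sub (hsa n)), fun x => ?_⟩
    rw [ContinuousLinearMap.reApplyInnerSelf_apply]
    have hsplit : RCLike.re ⟪(P - Q n) x, x⟫_ℂ
        = P.reApplyInnerSelf x - (Q n).reApplyInnerSelf x := by
      simp only [ContinuousLinearMap.reApplyInnerSelf_apply, ContinuousLinearMap.sub_apply,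
        inner_sub_left, map_sub]
    rw [hsplit, saIdem_reApply P (projL_sa W) (projL_idem W),
      saIdem_reApply _ (hsa n) (hid n)]
    have h1 : ‖Q n x‖ ≤ ‖P x‖ := by
      rw [← hQP n x]; exact hcontr n (P x)
    nlinarith [norm_nonneg (Q n x), norm_nonneg (P x)]
  have hleP : opLE 1 P := hlub.2 P (by rintro b ⟨n, rfl⟩; exact hub n)
  have hmemW : ∀ x : E, x ∈ W := by
    intro x
    have hsaD : IsSelfAdjoint ((1 : E →L[ℂ] E) - P) := by
      have h1 : IsSelfAdjoint (1 : E →L[ℂ] E) := by rw [IsSelfAdjoint]; exact star_one _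
      exact h1.sub (projL_sa W)
    have hidD : ((1 : E →L[ℂ] E) - P) * ((1 : E →L[ℂ] E) - P) = (1 : E →L[ℂ] E) - P := by
      simp only [mul_sub, sub_mul, one_mul, mul_one, show P * P = P from projL_idem W]
      abel
    have h2 := saIdem_reApply _ hsaD hidD x
    have h3 : ((1 : E →L[ℂ] E) - P).reApplyInnerSelf x ≤ 0 := by
      have := hleP.2 x
      rw [ContinuousLinearMap.reApplyInnerSelf_apply] at this ⊢
      have hneg : ((1 : E →L[ℂ] E) - P) x = -((P - 1) x) := by
        simp only [ContinuousLinearMap.sub_apply, ContinuousLinearMap.one_apply]; abel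
      rw [hneg, inner_neg_left, map_neg]
      linarith
    have h4 : ‖((1 : E →L[ℂ] E) - P) x‖ = 0 := by nlinarith [norm_nonneg (((1:E →L[ℂ] E) - P) x)]
    have h5 : x - P x = 0 := by simpa using norm_eq_zero.mp h4
    have : x = P x := by rw [sub_eq_zero] at h5; exact h5
    rw [this]
    exact projL_apply_mem W x
  have hdense : Dense (⋃ n, Set.range (Q n)) := by
    intro x
    have := hmemW x
    rw [hW] at this
    have h6 : x ∈ closure (Wsub : Set E) := by
      rw [← Submodule.topologicalClosure_coe]
      exact this
    exact h6
  exact strong_of_dense Q hfix hcontr hdense v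


lemma saIdem_le_one (Q : E →L[ℂ] E) (hsa : IsSelfAdjoint Q) (hid : Q * Q = Q) :
    opLE Q 1 := by
  have h1 : IsSelfAdjoint (1 : E →L[ℂ] E) := by rw [IsSelfAdjoint]; exact star_one _
  refine ⟨ContinuousLinearMap.isSelfAdjoint_iff_isSymmetric.mp (h1.sub hsa), fun x => ?_⟩
  rw [ContinuousLinearMap.reApplyInnerSelf_apply]
  have : RCLike.re ⟪((1 : E →L[ℂ] E) - Q) x, x⟫_ℂ = ‖x‖ ^ 2 - (Q.reApplyInnerSelf x) := by
    simp only [ContinuousLinearMap.sub_apply, ContinuousLinearMap.one_apply, inner_sub_left,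
      map_sub, ContinuousLinearMap.reApplyInnerSelf_apply]
    congr 1
    exact inner_self_eq_norm_sq (𝕜 := ℂ) x
  rw [this, saIdem_reApply Q hsa hid x]
  have := saIdem_norm_apply_le Q hsa hid x
  nlinarith [norm_nonneg (Q x), norm_nonneg x]

lemma projL_comp_of_le {V W : Submodule ℂ E} [CompleteSpace V] [CompleteSpace W]
    (h : V ≤ W) (x : E) : projL V (projL W x) = projL V x := by
  have horth : x - projL W x ∈ Vᗮ :=
    Submodule.orthogonal_le h (projL_sub_mem_orthogonal W x)
  have h0 : projL V (x - projL W x) = 0 := by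
    apply saIdem_apply_eq_zero _ (projL_sa V) (projL_idem V)
    exact Submodule.inner_right_of_mem_orthogonal (projL_apply_mem V _) horth
  have h1 := map_sub (projL V) x (projL W x)
  rw [h0] at h1
  have h2 := sub_eq_zero.mp h1.symm
  exact h2.symm

lemma projL_mono {V W : Submodule ℂ E} [CompleteSpace V] [CompleteSpace W] (h : V ≤ W) :
    opLE (projL V) (projL W) := by
  refine ⟨ContinuousLinearMap.isSelfAdjoint_iff_isSymmetric.mp ((projL_sa W).sub (projL_sa V)), fun x => ?_⟩
  rw [ContinuousLinearMap.reApplyInnerSelf_apply]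
  have hsplit : RCLike.re ⟪(projL W - projL V) x, x⟫_ℂ
      = (projL W).reApplyInnerSelf x - (projL V).reApplyInnerSelf x := by
    simp only [ContinuousLinearMap.reApplyInnerSelf_apply, ContinuousLinearMap.sub_apply,
      inner_sub_left, map_sub]
  rw [hsplit, saIdem_reApply _ (projL_sa W) (projL_idem W),
    saIdem_reApply _ (projL_sa V) (projL_idem V)]
  have h1 : ‖projL V x‖ ≤ ‖projL W x‖ := by
    rw [← projL_comp_of_le h x]
    exact saIdem_norm_apply_le _ (projL_sa V) (projL_idem V) _
  nlinarith [norm_nonneg (projL V x), norm_nonneg (projL W x)]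

end Statement12Aux

/-- Let `H` be a separable Hilbert space and `π : B(H) → B(Û)` a normal
unital *-homomorphism. If there is a separable subset `S ⊂ Û` such that the span of
`{π(A)v : A ∈ B(H), v ∈ S}` is dense in `Û`, then `Û` is separable. -/
theorem statement12 {H U : Type*} [NormedAddCommGroup H] [InnerProductSpace ℂ H] [CompleteSpace H]
    [TopologicalSpace.SeparableSpace H] [NormedAddCommGroup U] [InnerProductSpace ℂ U] [CompleteSpace U]
    (π : (H →L[ℂ] H) →⋆ₐ[ℂ] (U →L[ℂ] U)) (hπ : NormalHom π)
    (Sset : Set U) (hsep : TopologicalSpace.IsSeparable Sset)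
    (hdense : Dense (↑(Submodule.span ℂ
      {u : U | ∃ (Aop : H →L[ℂ] H), ∃ v ∈ Sset, u = π Aop v}) : Set U)) :
    TopologicalSpace.SeparableSpace U := by
  haveI : Nonempty H := ⟨0⟩
  obtain ⟨u, hu⟩ := TopologicalSpace.exists_dense_seq H
  -- finite-dimensional subspaces spanned by initial segments of the dense sequence
  set V : ℕ → Submodule ℂ H := fun n => Submodule.span ℂ (u '' Set.Iio n) with hV
  letI hVfd : ∀ n, FiniteDimensional ℂ (V n) := fun n =>
    FiniteDimensional.span_of_finite ℂ ((Set.finite_Iio n).image u)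
  letI hVc : ∀ n, CompleteSpace (V n) := fun n => FiniteDimensional.complete ℂ (V n)
  set P : ℕ → (H →L[ℂ] H) := fun n => projL (V n) with hPdef
  have hVmono : ∀ n m, n ≤ m → V n ≤ V m := fun n m h =>
    Submodule.span_mono (Set.image_mono (f := u) (Set.Iio_subset_Iio h))
  have hPsa : ∀ n, IsSelfAdjoint (P n) := fun n => projL_sa (V n)
  have hPid : ∀ n, P n * P n = P n := fun n => projL_idem (V n)
  have hPmono : ∀ n m, n ≤ m → opLE (P n) (P m) := fun n m h => projL_mono (hVmono n m h)
  have hPcontr : ∀ n (x : H), ‖P n x‖ ≤ ‖x‖ := fun n x =>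
    saIdem_norm_apply_le _ (hPsa n) (hPid n) x
  have hPfix : ∀ n m, n ≤ m → ∀ x, P m (P n x) = P n x := fun n m h x =>
    projL_apply_of_mem (V m) (hVmono n m h (projL_apply_mem (V n) x))
  have hPdense : Dense (⋃ n, Set.range (P n)) := by
    apply hu.mono
    rintro _ ⟨k, rfl⟩
    refine Set.mem_iUnion.mpr ⟨k + 1, ⟨u k, ?_⟩⟩
    exact projL_apply_of_mem _ (Submodule.subset_span ⟨k, by simp, rfl⟩)
  have hPstrong : ∀ x : H, Tendsto (fun n => P n x) atTop (𝓝 x) :=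
    strong_of_dense P hPfix hPcontr hPdense
  -- `1` is the least upper bound of the `P n`
  have hPlub : opIsLUB (Set.range P) 1 := by
    constructor
    · rintro b ⟨n, rfl⟩
      exact saIdem_le_one _ (hPsa n) (hPid n)
    · intro c hc
      have hsa1 : IsSelfAdjoint (1 : H →L[ℂ] H) := by rw [IsSelfAdjoint]; exact star_one _
      have hsaC : IsSelfAdjoint c := by
        have h1 := (hc (P 0) ⟨0, rfl⟩).1
        have := h1.isSelfAdjoint.add (hPsa 0)
        simpa using this
      refine ⟨ContinuousLinearMap.isSelfAdjoint_iff_isSymmetric.mp (hsaC.sub hsa1), fun x => ?_⟩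
      rw [ContinuousLinearMap.reApplyInnerSelf_apply]
      have key : ∀ n, ‖P n x‖ ^ 2 - ‖x‖ ^ 2 ≤ RCLike.re ⟪(c - 1) x, x⟫_ℂ := by
        intro n
        have h2 := (hc (P n) ⟨n, rfl⟩).2 x
        rw [ContinuousLinearMap.reApplyInnerSelf_apply] at h2
        have hsplit : RCLike.re ⟪(c - 1) x, x⟫_ℂ
            = RCLike.re ⟪(c - P n) x, x⟫_ℂ + ((P n).reApplyInnerSelf x - ‖x‖ ^ 2) := by
          simp only [ContinuousLinearMap.reApplyInnerSelf_apply, ContinuousLinearMap.sub_apply,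
            inner_sub_left, map_sub, ContinuousLinearMap.one_apply]
          have : RCLike.re ⟪x, x⟫_ℂ = ‖x‖ ^ 2 := by exact inner_self_eq_norm_sq (𝕜 := ℂ) x
          rw [this]
          ring
        rw [hsplit, saIdem_reApply _ (hPsa n) (hPid n)]
        linarith
      have hlim : Tendsto (fun n => ‖P n x‖ ^ 2 - ‖x‖ ^ 2) atTop (𝓝 0) := by
        have h3 : Tendsto (fun n => ‖P n x‖) atTop (𝓝 ‖x‖) := (hPstrong x).norm
        have h4 : Tendsto (fun n => ‖P n x‖ ^ 2 - ‖x‖ ^ 2) atTop (𝓝 (‖x‖ ^ 2 - ‖x‖ ^ 2)) :=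
          ((h3.pow 2).sub tendsto_const_nhds)
        simpa using h4
      exact le_of_tendsto' hlim key
  -- transfer to `U` via `π`
  set Q : ℕ → (U →L[ℂ] U) := fun n => π (P n) with hQdef
  have hQsa : ∀ n, IsSelfAdjoint (Q n) := by
    intro n
    rw [IsSelfAdjoint, ← map_star]
    congr 1
    exact (hPsa n)
  have hQid : ∀ n, Q n * Q n = Q n := by
    intro n
    rw [hQdef]
    simp only [← map_mul, hPid n]
  have hDsaIdem : ∀ n m, n ≤ m → IsSelfAdjoint (P m - P n) ∧ (P m - P n) * (P m - P n) = P m - P n := by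
    intro n m h
    refine ⟨(hPsa m).sub (hPsa n), ?_⟩
    have hnm : P n * P m = P n := by ext x; exact projL_comp_of_le (hVmono n m h) x
    have hmn : P m * P n = P n := by ext x; exact hPfix n m h x
    rw [sub_mul, mul_sub, mul_sub, hPid m, hPid n, hnm, hmn]
    abel
  have hQmono : ∀ n m, n ≤ m → opLE (Q n) (Q m) := by
    intro n m h
    obtain ⟨hsaD, hidD⟩ := hDsaIdem n m h
    have : Q m - Q n = π (P m - P n) := by rw [map_sub]
    rw [opLE, this]
    apply saIdem_isPositive
    · rw [IsSelfAdjoint, ← map_star, hsaD.star_eq]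
    · rw [← map_mul, hidD]
  have hQlub : opIsLUB (Set.range Q) 1 := by
    have := hπ P 1 (fun n => saIdem_isPositive _ (hPsa n) (hPid n)) hPmono
      ⟨1, fun n => saIdem_le_one _ (hPsa n) (hPid n)⟩ hPlub
    rwa [map_one] at this
  have hQstrong : ∀ v : U, Tendsto (fun n => Q n v) atTop (𝓝 v) :=
    saIdem_strong_of_isLUB_one Q hQsa hQid hQmono hQlub
  -- contractivity and continuity of `π`
  have hπnorm : ∀ B : H →L[ℂ] H, ‖π B‖ ≤ ‖B‖ := fun B => NonUnitalStarAlgHom.norm_apply_le π B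
  have hπcont : Continuous fun B : H →L[ℂ] H => π B := by
    exact AddMonoidHomClass.continuous_of_bound π 1 (fun B => by simpa using hπnorm B)
  -- countable approximating data
  obtain ⟨c₀, hc₀count, hSc⟩ := hsep
  -- the continuous trilinear-ish map
  set g : H × H × U → U := fun p => π ((innerSL ℂ p.2.1).smulRight p.1) p.2.2 with hgdef
  have hRcont : Continuous fun q : H × H => (innerSL ℂ q.2).smulRight q.1 := by
    have h1 : Continuous fun q : H × H => ContinuousLinearMap.smulRightL ℂ H H (innerSL ℂ q.2) :=
      (ContinuousLinearMap.smulRightL ℂ H H).continuous.comp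
        ((innerSL ℂ).continuous.comp continuous_snd)
    exact h1.clm_apply continuous_fst
  have hgcont : Continuous g := by
    apply Continuous.clm_apply
    · exact hπcont.comp (hRcont.comp (continuous_fst.prodMk (continuous_fst.comp continuous_snd)))
    · exact continuous_snd.comp continuous_snd
  set D : Set U := g '' ((Set.range u) ×ˢ ((Set.range u) ×ˢ c₀)) with hDdef
  have hDcount : D.Countable :=
    (((Set.countable_range u).prod ((Set.countable_range u).prod hc₀count))).image g
  set Z := (Submodule.span ℂ D).topologicalClosure with hZdef
  have hZclosed : IsClosed (Z : Set U) := Submodule.isClosed_topologicalClosure _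
  -- Step 3 : all `π(|x⟩⟨y|) v`, `v ∈ Sset`, lie in `Z`
  have step3 : ∀ (x y : H) (v : U), v ∈ Sset → π ((innerSL ℂ y).smulRight x) v ∈ Z := by
    intro x y v hv
    have hmemcl : (x, y, v) ∈ closure ((Set.range u) ×ˢ ((Set.range u) ×ˢ c₀)) := by
      rw [closure_prod_eq, closure_prod_eq]
      exact Set.mem_prod.mpr ⟨hu x, Set.mem_prod.mpr ⟨hu y, hSc hv⟩⟩
    have hmem2 : g (x, y, v) ∈ closure D := by
      have h1 := image_closure_subset_closure_image (s := (Set.range u) ×ˢ ((Set.range u) ×ˢ c₀))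
        hgcont
      exact h1 ⟨_, hmemcl, rfl⟩
    have hDZ : closure D ⊆ (Z : Set U) :=
      closure_minimal (Set.Subset.trans Submodule.subset_span
        (Submodule.le_topologicalClosure _)) hZclosed
    exact hDZ hmem2
  -- Step 2 : all `π(A Pₙ) v`, `v ∈ Sset`, lie in `Z`
  have step2 : ∀ (A : H →L[ℂ] H) (v : U), v ∈ Sset → ∀ n, π (A * P n) v ∈ Z := by
    intro A v hv n
    set b := stdOrthonormalBasis ℂ (V n) with hb
    have hPn : ∀ z : H, P n z = ∑ i, ⟪((b i : H)), z⟫_ℂ • (b i : H) := by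
      intro z
      have h1 := b.orthogonalProjectionOnto_apply_eq_sum z
      calc P n z = (((V n).orthogonalProjectionOnto z : V n) : H) := rfl
      _ = _ := by rw [h1]; push_cast; rfl
    have hAP : A * P n = ∑ i, (innerSL ℂ ((b i : H))).smulRight (A (b i : H)) := by
      ext z
      simp only [ContinuousLinearMap.mul_apply, ContinuousLinearMap.sum_apply,
        ContinuousLinearMap.smulRight_apply, innerSL_apply_apply]
      rw [hPn z, map_sum]
      simp [map_smul]
    have heq : π (A * P n) v
        = ∑ i, π ((innerSL ℂ ((b i : H))).smulRight (A (b i : H))) v := by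
      rw [hAP, map_sum, ContinuousLinearMap.sum_apply]
    rw [heq]
    exact Submodule.sum_mem Z (fun i _ => step3 _ _ v hv)
  -- Main claim : the generating set lies in `Z`
  have hsub : {w : U | ∃ (Aop : H →L[ℂ] H), ∃ v ∈ Sset, w = π Aop v} ⊆ (Z : Set U) := by
    rintro w ⟨A, v, hv, rfl⟩
    have hlim : Tendsto (fun n => π (A * P n) v) atTop (𝓝 (π A v)) := by
      have h1 : ∀ n, π (A * P n) v = π A (Q n v) := by
        intro n; rw [map_mul]; rfl
      simp only [h1]
      exact ((π A).continuous.tendsto _).comp (hQstrong v)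
    exact hZclosed.mem_of_tendsto hlim (Filter.Eventually.of_forall fun n => step2 A v hv n)
  -- Conclude separability
  have hspan : Submodule.span ℂ {w : U | ∃ (Aop : H →L[ℂ] H), ∃ v ∈ Sset, w = π Aop v} ≤ Z :=
    Submodule.span_le.mpr hsub
  have hZdense : Dense (Z : Set U) := hdense.mono hspan
  have hsepspan : TopologicalSpace.IsSeparable ((Submodule.span ℂ D : Submodule ℂ U) : Set U) :=
    (hDcount.isSeparable).span
  obtain ⟨c', hc'count, hc'sub⟩ := hsepspan
  refine ⟨⟨c', hc'count, ?_⟩⟩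
  have h7 : (Z : Set U) ⊆ closure c' := by
    rw [hZdef, Submodule.topologicalClosure_coe]
    exact closure_minimal hc'sub isClosed_closure
  have h8 : Dense (closure c') := hZdense.mono h7
  exact dense_closure.mp h8


end QSM
end
end

section
/- Let S be a (not necessarily deterministic) quantum supermap from CB(M₁,B(K₁)) to CB(M₂,B(K₂)), with M₁ ⊂ B(H₁). Define on the algebraic tensor product B(K₁,H₁) ⊗ M₂ ⊗ K₂ the sesquilinear form ⟨E₁⊗A₁⊗v₁, E₂⊗A₂⊗v₂⟩_S := ⟨v₁, [S(E₁*⊙E₂)](A₁*A₂) v₂⟩, where (E₁*⊙E₂)(X) = E₁*XE₂ on M₁. Then this form is positive semidefinite. Moreover, if T is another quantum supermap with S − T completely positive and normal, then 0 ≤ ⟨φ,φ⟩_T ≤ ⟨φ,φ⟩_S for all φ in the algebraic tensor product. -/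
open scoped ComplexOrder InnerProductSpace
open Filter Topology ContinuousLinearMap

set_option synthInstance.maxHeartbeats 1000000
set_option maxHeartbeats 1000000

noncomputable section

namespace QSM

variable {H K : Type*}
  [NormedAddCommGroup H] [InnerProductSpace ℂ H] [CompleteSpace H]
  [NormedAddCommGroup K] [InnerProductSpace ℂ K] [CompleteSpace K]

variable (S : StarSubalgebra ℂ (H →L[ℂ] H))

set_option linter.unusedSectionVars false

section Helpers

open ContinuousLinearMap

variable {ι : Type*} [Fintype ι] [DecidableEq ι]
variable {E F G : Type*} [NormedAddCommGroup E] [InnerProductSpace ℂ E] [CompleteSpace E]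
  [NormedAddCommGroup F] [InnerProductSpace ℂ F] [CompleteSpace F]
  [NormedAddCommGroup G] [InnerProductSpace ℂ G] [CompleteSpace G]

lemma inclCLM_apply (i : ι) (x : E) (j : ι) :
    (inclCLM E i x) j = if j = i then x else 0 := by
  show (if j = i then ContinuousLinearMap.id ℂ E else 0) x = _
  split_ifs <;> rfl

lemma matOp_apply (T : ι → ι → (E →L[ℂ] F)) (x : PiLp 2 fun _ : ι => E) (i : ι) :
    (matOp T) x i = ∑ j, T i j (x j) := by
  show (∑ k, ∑ j, (inclCLM F k).comp ((T k j).comp (projCLM E j))) x i = _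
  simp only [ContinuousLinearMap.sum_apply, ContinuousLinearMap.comp_apply]
  have : (∑ k, ∑ j, inclCLM F k ((T k j) (projCLM E j x))) i
      = ∑ k, ∑ j, (inclCLM F k ((T k j) (projCLM E j x))) i := by
    rw [WithLp.ofLp_sum, Finset.sum_apply]
    exact Finset.sum_congr rfl fun k _ => by rw [WithLp.ofLp_sum, Finset.sum_apply]
  rw [this]
  simp only [inclCLM_apply]
  rw [Finset.sum_comm]
  refine Finset.sum_congr rfl fun j _ => ?_
  simp [projCLM]

lemma inner_matOp (T : ι → ι → (E →L[ℂ] F)) (w : PiLp 2 fun _ : ι => F)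
    (x : PiLp 2 fun _ : ι => E) :
    ⟪w, matOp T x⟫_ℂ = ∑ i, ∑ j, ⟪w i, T i j (x j)⟫_ℂ := by
  rw [PiLp.inner_apply]
  refine Finset.sum_congr rfl fun i _ => ?_
  rw [matOp_apply, inner_sum]

lemma matOp_adjoint (D : ι → ι → (E →L[ℂ] F)) :
    ContinuousLinearMap.adjoint (matOp D) = matOp (fun i j => ContinuousLinearMap.adjoint (D j i)) := by
  refine ContinuousLinearMap.ext fun x => ext_inner_left ℂ fun w => ?_
  rw [ContinuousLinearMap.adjoint_inner_right, ← inner_conj_symm, inner_matOp, map_sum,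
    inner_matOp, Finset.sum_comm]
  refine Finset.sum_congr rfl fun i _ => ?_
  rw [map_sum]
  refine Finset.sum_congr rfl fun j _ => ?_
  rw [inner_conj_symm, ContinuousLinearMap.adjoint_inner_right]

lemma matOp_comp (S : ι → ι → (F →L[ℂ] G)) (D : ι → ι → (E →L[ℂ] F)) :
    (matOp S) ∘L (matOp D) = matOp (fun i l => ∑ j, S i j ∘L D j l) := by
  refine ContinuousLinearMap.ext fun x => ext_inner_left ℂ fun w => ?_
  rw [ContinuousLinearMap.comp_apply, inner_matOp, inner_matOp]
  refine Finset.sum_congr rfl fun i _ => ?_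
  simp only [matOp_apply, map_sum, inner_sum, ContinuousLinearMap.sum_apply,
    ContinuousLinearMap.comp_apply]
  exact Finset.sum_comm

lemma ones_isPositive :
    (matOp fun _ _ : ι => (1 : E →L[ℂ] E)).IsPositive := by
  refine isPositive_def'.mpr ⟨?_, ?_⟩
  · rw [ContinuousLinearMap.isSelfAdjoint_iff', matOp_adjoint]
    have : (fun i j : ι => ContinuousLinearMap.adjoint (1 : E →L[ℂ] E)) = fun _ _ => 1 := by
      funext i j
      exact adjoint_id
    rw [this]
  · intro w
    have h : ⟪w, (matOp fun _ _ : ι => (1 : E →L[ℂ] E)) w⟫_ℂ = ⟪∑ i, w i, ∑ i, w i⟫_ℂ := by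
      rw [inner_matOp, sum_inner]
      exact Finset.sum_congr rfl fun i _ => by rw [inner_sum]; simp
    have : ContinuousLinearMap.reApplyInnerSelf (matOp fun _ _ : ι => (1 : E →L[ℂ] E)) w
        = RCLike.re ⟪∑ i, w i, ∑ i, w i⟫_ℂ := by
      rw [ContinuousLinearMap.reApplyInnerSelf_apply, ← inner_re_symm, h]
    rw [this]
    exact inner_self_nonneg

lemma diag_conj_isPositive (T : ι → ι → (F →L[ℂ] F)) (Dd : ι → (E →L[ℂ] F))
    (hT : (matOp T).IsPositive) :
    (matOp fun k l => (ContinuousLinearMap.adjoint (Dd k)) ∘L (T k l ∘L Dd l)).IsPositive := by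
  set D : (PiLp 2 fun _ : ι => E) →L[ℂ] (PiLp 2 fun _ : ι => F) :=
    matOp (fun i j => if i = j then Dd j else 0) with hD
  have h1 : (matOp T) ∘L D = matOp (fun i l => T i l ∘L Dd l) := by
    rw [hD, matOp_comp]
    congr 1; funext i l
    have : ∀ j, T i j ∘L (if j = l then Dd l else 0) = if j = l then T i j ∘L Dd j else 0 := by
      intro j; split_ifs with h
      · subst h; rfl
      · exact ContinuousLinearMap.comp_zero _
    simp only [this, Finset.sum_ite_eq', Finset.mem_univ, if_true]
  have h2 : ContinuousLinearMap.adjoint D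
      = matOp (fun i j => if i = j then ContinuousLinearMap.adjoint (Dd i) else 0) := by
    rw [hD, matOp_adjoint]
    congr 1; funext i j
    by_cases h : i = j
    · subst h; rw [if_pos rfl, if_pos rfl]
    · rw [if_neg (fun hh => h hh.symm), if_neg h]
      exact map_zero (ContinuousLinearMap.adjoint :
        (E →L[ℂ] F) ≃ₗᵢ⋆[ℂ] (F →L[ℂ] E))
  have h3 : ContinuousLinearMap.adjoint D ∘L ((matOp T) ∘L D)
      = matOp fun k l => (ContinuousLinearMap.adjoint (Dd k)) ∘L (T k l ∘L Dd l) := by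
    rw [h1, h2, matOp_comp]
    congr 1; funext k l
    have : ∀ j, (if k = j then ContinuousLinearMap.adjoint (Dd k) else 0) ∘L (T j l ∘L Dd l)
        = if j = k then ContinuousLinearMap.adjoint (Dd k) ∘L (T k l ∘L Dd l) else 0 := by
      intro j
      by_cases h : j = k
      · subst h; rw [if_pos rfl, if_pos rfl]
      · rw [if_neg (fun hh => h hh.symm), if_neg h, ContinuousLinearMap.zero_comp]
    simp only [this, Finset.sum_ite_eq', Finset.mem_univ, if_true]
  rw [← h3]
  exact hT.adjoint_conj D

lemma gram_isPositive (Aop : ι → (E →L[ℂ] E)) :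
    (matOp fun k l => (ContinuousLinearMap.adjoint (Aop k)) ∘L Aop l).IsPositive := by
  have h := diag_conj_isPositive (fun _ _ : ι => (1 : E →L[ℂ] E)) Aop ones_isPositive
  have he : (fun k l => (ContinuousLinearMap.adjoint (Aop k)) ∘L ((1 : E →L[ℂ] E) ∘L Aop l))
      = fun k l => (ContinuousLinearMap.adjoint (Aop k)) ∘L Aop l := by
    funext k l; rw [ContinuousLinearMap.one_def, ContinuousLinearMap.id_comp]
  rwa [he] at h

end Helpers
section Key

variable {H₁ K₁ H₂ K₂ : Type*} [NormedAddCommGroup H₁] [InnerProductSpace ℂ H₁] [CompleteSpace H₁]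
    [NormedAddCommGroup K₁] [InnerProductSpace ℂ K₁] [CompleteSpace K₁]
    [NormedAddCommGroup H₂] [InnerProductSpace ℂ H₂] [CompleteSpace H₂]
    [NormedAddCommGroup K₂] [InnerProductSpace ℂ K₂] [CompleteSpace K₂]

lemma key (M₁ : VonNeumannAlgebra H₁) (M₂ : VonNeumannAlgebra H₂)
    (Sm : CBsp M₁ (topVN K₁) →ₗ[ℂ] CBsp M₂ (topVN K₂)) (hS : SupCP Sm)
    (n : ℕ) (Ee : Fin n → (K₁ →L[ℂ] H₁)) (X : Fin n → Fin n → CBsp M₁ (topVN K₁))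
    (hX : ∀ i j, (X i j : M₁.toStarSubalgebra →ₗ[ℂ] (K₁ →L[ℂ] K₁))
      = sandwichMap M₁.toStarSubalgebra (ContinuousLinearMap.adjoint (Ee i)) (Ee j))
    (A : Fin n → M₂.toStarSubalgebra) (v : Fin n → K₂) :
    0 ≤ ∑ i, ∑ j, ⟪v i, ((Sm (X i j) : M₂.toStarSubalgebra →ₗ[ℂ] (K₂ →L[ℂ] K₂))
        (star (A i) * A j)) (v j)⟫_ℂ := by
  classical
  set t : Fin n → Fin n → Fin n → Fin n → CBsp M₁ (topVN K₁) :=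
    fun k l i j => if j = l ∧ i = k then X i j else 0 with ht
  -- input positivity hypothesis of SupCP
  have hpre : ∀ Am : Matrix (Fin n) (Fin n) M₁.toStarSubalgebra,
      (matOp fun i j => ((Am i j : H₁ →L[ℂ] H₁))).IsPositive →
      (matOp fun k l => ∑ i, ∑ j,
        ((t k l i j : M₁.toStarSubalgebra →ₗ[ℂ] (K₁ →L[ℂ] K₁)) (Am i j))).IsPositive := by
    intro Am hAm
    have hentry : (fun k l => ∑ i, ∑ j,
        ((t k l i j : M₁.toStarSubalgebra →ₗ[ℂ] (K₁ →L[ℂ] K₁)) (Am i j)))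
        = fun k l => (ContinuousLinearMap.adjoint (Ee k)) ∘L
            (((Am k l : H₁ →L[ℂ] H₁)) ∘L Ee l) := by
      funext k l
      have h1 : ∀ i j, ((t k l i j : M₁.toStarSubalgebra →ₗ[ℂ] (K₁ →L[ℂ] K₁)) (Am i j))
          = if j = l then (if i = k then
              (X i j : M₁.toStarSubalgebra →ₗ[ℂ] (K₁ →L[ℂ] K₁)) (Am i j) else 0) else 0 := by
        intro i j
        by_cases h : j = l ∧ i = k
        · rw [ht]; simp only [if_pos h, if_pos h.1, if_pos h.2]
        · rw [ht]
          simp only [if_neg h]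
          rw [ZeroMemClass.coe_zero, LinearMap.zero_apply]
          by_cases h1 : j = l
          · by_cases h2 : i = k
            · exact absurd ⟨h1, h2⟩ h
            · rw [if_pos h1, if_neg h2]
          · rw [if_neg h1]
      simp only [h1, Finset.sum_ite_eq', Finset.mem_univ, if_true]
      rw [hX k l]
      rfl
    rw [hentry]
    exact diag_conj_isPositive _ Ee hAm
  -- output matrix positivity
  have hBent : (fun i j => ((star (A i) * A j : M₂.toStarSubalgebra) : H₂ →L[ℂ] H₂))
      = fun i j => (ContinuousLinearMap.adjoint ((A i : H₂ →L[ℂ] H₂))) ∘L (A j : H₂ →L[ℂ] H₂) := by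
    funext i j
    rw [MulMemClass.coe_mul]
    have : ((star (A i) : M₂.toStarSubalgebra) : H₂ →L[ℂ] H₂) = star ((A i : H₂ →L[ℂ] H₂)) := rfl
    rw [this, ContinuousLinearMap.star_eq_adjoint]
    rfl
  have hB : (matOp fun i j =>
      (((star (A i) * A j : M₂.toStarSubalgebra) : H₂ →L[ℂ] H₂))).IsPositive := by
    rw [hBent]; exact gram_isPositive _
  have hpos : (matOp fun k l => ∑ i, ∑ j,
      ((Sm (t k l i j) : M₂.toStarSubalgebra →ₗ[ℂ] (K₂ →L[ℂ] K₂))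
        (star (A i) * A j))).IsPositive :=
    hS n t hpre (fun i j => star (A i) * A j) hB
  -- simplify the entries of the conclusion
  have hentry2 : (fun k l => ∑ i, ∑ j,
      ((Sm (t k l i j) : M₂.toStarSubalgebra →ₗ[ℂ] (K₂ →L[ℂ] K₂)) (star (A i) * A j)))
      = fun k l => ((Sm (X k l) : M₂.toStarSubalgebra →ₗ[ℂ] (K₂ →L[ℂ] K₂))
          (star (A k) * A l)) := by
    funext k l
    have h1 : ∀ i j, ((Sm (t k l i j) : M₂.toStarSubalgebra →ₗ[ℂ] (K₂ →L[ℂ] K₂))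
        (star (A i) * A j))
        = if j = l then (if i = k then
            ((Sm (X i j) : M₂.toStarSubalgebra →ₗ[ℂ] (K₂ →L[ℂ] K₂)) (star (A i) * A j))
            else 0) else 0 := by
      intro i j
      by_cases h : j = l ∧ i = k
      · rw [ht]; simp only [if_pos h, if_pos h.1, if_pos h.2]
      · rw [ht]
        simp only [if_neg h, map_zero, ZeroMemClass.coe_zero, LinearMap.zero_apply]
        by_cases h1 : j = l
        · by_cases h2 : i = k
          · exact absurd ⟨h1, h2⟩ h
          · rw [if_pos h1, if_neg h2]
        · rw [if_neg h1]
    simp only [h1, Finset.sum_ite_eq', Finset.mem_univ, if_true]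
  rw [hentry2] at hpos
  -- read off positivity of the scalar
  set w : PiLp 2 (fun _ : Fin n => K₂) := WithLp.toLp 2 (fun i => v i) with hw
  have hinner : ⟪w, (matOp fun k l => ((Sm (X k l) : M₂.toStarSubalgebra →ₗ[ℂ] (K₂ →L[ℂ] K₂))
      (star (A k) * A l))) w⟫_ℂ
      = ∑ i, ∑ j, ⟪v i, ((Sm (X i j) : M₂.toStarSubalgebra →ₗ[ℂ] (K₂ →L[ℂ] K₂))
        (star (A i) * A j)) (v j)⟫_ℂ := inner_matOp _ w w
  rw [← hinner]
  set z : ℂ := ⟪w, (matOp fun k l => ((Sm (X k l) : M₂.toStarSubalgebra →ₗ[ℂ] (K₂ →L[ℂ] K₂))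
      (star (A k) * A l))) w⟫_ℂ with hz
  have hre : 0 ≤ z.re := hpos.re_inner_nonneg_right w
  have him : z.im = 0 := by
    have h1 : (starRingEnd ℂ) z = z := by
      rw [hz, inner_conj_symm]
      exact (isSelfAdjoint_iff_isSymmetric.mp hpos.isSelfAdjoint) w w
    exact Complex.conj_eq_iff_im.mp h1
  rw [Complex.le_def]
  exact ⟨hre, him.symm⟩

end Key
/-- The sesquilinear form `⟨·,·⟩_S` associated to a quantum supermap `S` is
positive semidefinite; moreover if `T` is a quantum supermap with `S − T` a quantum supermap,
then `0 ≤ ⟨φ,φ⟩_T ≤ ⟨φ,φ⟩_S` for all `φ` in the algebraic tensor product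
`B(K₁,H₁) ⊗ M₂ ⊗ K₂`. -/
theorem statement14 {H₁ K₁ H₂ K₂ : Type*} [NormedAddCommGroup H₁] [InnerProductSpace ℂ H₁] [CompleteSpace H₁]
    [TopologicalSpace.SeparableSpace H₁] [NormedAddCommGroup K₁] [InnerProductSpace ℂ K₁] [CompleteSpace K₁]
    [TopologicalSpace.SeparableSpace K₁] [NormedAddCommGroup H₂] [InnerProductSpace ℂ H₂] [CompleteSpace H₂]
    [TopologicalSpace.SeparableSpace H₂] [NormedAddCommGroup K₂] [InnerProductSpace ℂ K₂] [CompleteSpace K₂]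
    [TopologicalSpace.SeparableSpace K₂]
    (M₁ : VonNeumannAlgebra H₁) (M₂ : VonNeumannAlgebra H₂)
    (Sm : CBsp M₁ (topVN K₁) →ₗ[ℂ] CBsp M₂ (topVN K₂)) (hS : IsSupermap Sm)
    (n : ℕ) (Ee : Fin n → (K₁ →L[ℂ] H₁)) (X : Fin n → Fin n → CBsp M₁ (topVN K₁))
    (hX : ∀ i j, (X i j : M₁.toStarSubalgebra →ₗ[ℂ] (K₁ →L[ℂ] K₁))
      = sandwichMap M₁.toStarSubalgebra (ContinuousLinearMap.adjoint (Ee i)) (Ee j))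
    (A : Fin n → M₂.toStarSubalgebra) (v : Fin n → K₂) :
    (0 ≤ ∑ i, ∑ j, ⟪v i, ((Sm (X i j) : M₂.toStarSubalgebra →ₗ[ℂ] (K₂ →L[ℂ] K₂))
        (star (A i) * A j)) (v j)⟫_ℂ) ∧
    ∀ Tm Dm : CBsp M₁ (topVN K₁) →ₗ[ℂ] CBsp M₂ (topVN K₂),
      IsSupermap Tm → (∀ X' : CBsp M₁ (topVN K₁), Sm X' = Tm X' + Dm X') → IsSupermap Dm →
      (0 ≤ ∑ i, ∑ j, ⟪v i, ((Tm (X i j) : M₂.toStarSubalgebra →ₗ[ℂ] (K₂ →L[ℂ] K₂))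
          (star (A i) * A j)) (v j)⟫_ℂ) ∧
      (∑ i, ∑ j, ⟪v i, ((Tm (X i j) : M₂.toStarSubalgebra →ₗ[ℂ] (K₂ →L[ℂ] K₂))
          (star (A i) * A j)) (v j)⟫_ℂ)
        ≤ ∑ i, ∑ j, ⟪v i, ((Sm (X i j) : M₂.toStarSubalgebra →ₗ[ℂ] (K₂ →L[ℂ] K₂))
          (star (A i) * A j)) (v j)⟫_ℂ := by
  refine ⟨key M₁ M₂ Sm hS.1 n Ee X hX A v, ?_⟩
  intro Tm Dm hT hsum hD
  have h1 := key M₁ M₂ Tm hT.1 n Ee X hX A v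
  have h2 := key M₁ M₂ Dm hD.1 n Ee X hX A v
  refine ⟨h1, ?_⟩
  have heq : ∀ i j : Fin n,
      ⟪v i, ((Sm (X i j) : M₂.toStarSubalgebra →ₗ[ℂ] (K₂ →L[ℂ] K₂)) (star (A i) * A j)) (v j)⟫_ℂ
      = ⟪v i, ((Tm (X i j) : M₂.toStarSubalgebra →ₗ[ℂ] (K₂ →L[ℂ] K₂)) (star (A i) * A j)) (v j)⟫_ℂ
      + ⟪v i, ((Dm (X i j) : M₂.toStarSubalgebra →ₗ[ℂ] (K₂ →L[ℂ] K₂)) (star (A i) * A j)) (v j)⟫_ℂ := by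
    intro i j
    rw [hsum (X i j), ← inner_add_right]
    rfl
  have hsplit : (∑ i, ∑ j, ⟪v i, ((Sm (X i j) : M₂.toStarSubalgebra →ₗ[ℂ] (K₂ →L[ℂ] K₂))
      (star (A i) * A j)) (v j)⟫_ℂ)
      = (∑ i, ∑ j, ⟪v i, ((Tm (X i j) : M₂.toStarSubalgebra →ₗ[ℂ] (K₂ →L[ℂ] K₂))
          (star (A i) * A j)) (v j)⟫_ℂ)
      + ∑ i, ∑ j, ⟪v i, ((Dm (X i j) : M₂.toStarSubalgebra →ₗ[ℂ] (K₂ →L[ℂ] K₂))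
          (star (A i) * A j)) (v j)⟫_ℂ := by
    simp only [heq, Finset.sum_add_distrib]
  rw [hsplit]
  exact le_add_of_nonneg_right h2

end QSM
end
end
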